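/- Let x_1 ≤ x_2 ≤ … ≤ x_n be real numbers and k ≥ 2. Let D_i(m) denote the minimum cost of partitioning x_1, …, x_m into at most i consecutive groups (squared-distance cluster costs), and let D̃_i(m) denote the minimum cost of partitioning the suffix x_m, …, x_n into at most i consecutive groups. Then the optimal k-cluster cost splits at the middle: D_k(n) = min_{0 ≤ j ≤ n} ( D_{⌊k/2⌋}(j) + D̃_{k−⌊k/2⌋}(j+1) ), where D_{⌊k/2⌋}(0) = 0 and D̃_{k−⌊k/2⌋}(n+1) = 0. -/

import Mathlib

/-- The squared-distance cluster cost of grouping `x_i, …, x_j` into one cluster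
with the optimal centroid (the arithmetic mean); `0` when `i > j`. -/
noncomputable def clusterCost (x : ℕ → ℝ) (i j : ℕ) : ℝ :=
  ∑ ℓ ∈ Finset.Icc i j,
    (x ℓ - (∑ t ∈ Finset.Icc i j, x t) / ((Finset.Icc i j).card : ℝ)) ^ 2

/-- `kCost x i m` is the minimum cost of partitioning `x_1, …, x_m` into at most
`i` consecutive groups, each charged its squared-distance cluster cost
(`kCost x i 0 = 0`). -/
noncomputable def kCost (x : ℕ → ℝ) (i m : ℕ) : ℝ :=
  sInf { c : ℝ | ∃ b : ℕ → ℕ, Monotone b ∧ b 0 = 0 ∧ b i = m ∧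
    c = ∑ t ∈ Finset.range i, clusterCost x (b t + 1) (b (t + 1)) }

/-- `kCostSuffix x n i m` is the minimum cost of partitioning the suffix
`x_m, …, x_n` into at most `i` consecutive groups, each charged its
squared-distance cluster cost (`kCostSuffix x n i (n+1) = 0`). -/
noncomputable def kCostSuffix (x : ℕ → ℝ) (n i m : ℕ) : ℝ :=
  sInf { c : ℝ | ∃ b : ℕ → ℕ, Monotone b ∧ b 0 = m - 1 ∧ b i = n ∧
    c = ∑ t ∈ Finset.range i, clusterCost x (b t + 1) (b (t + 1)) }

lemma clusterCost_nonneg (x : ℕ → ℝ) (i j : ℕ) : 0 ≤ clusterCost x i j :=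
  Finset.sum_nonneg fun _ _ => sq_nonneg _

lemma costSum_nonneg (x : ℕ → ℝ) (i : ℕ) (b : ℕ → ℕ) :
    0 ≤ ∑ t ∈ Finset.range i, clusterCost x (b t + 1) (b (t + 1)) :=
  Finset.sum_nonneg fun _ _ => clusterCost_nonneg x _ _

lemma sum_split (k : ℕ) (f : ℕ → ℝ) :
    ∑ t ∈ Finset.range k, f t
      = ∑ t ∈ Finset.range (k / 2), f t
        + ∑ t ∈ Finset.range (k - k / 2), f (k / 2 + t) := by
  rw [← Finset.sum_range_add_sum_Ico f (Nat.div_le_self k 2),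
    Finset.sum_Ico_eq_sum_range]


/-- For sorted reals `x_1 ≤ … ≤ x_n` and `k ≥ 2`, the optimal
`k`-cluster cost splits at the middle:
`D_k(n) = min_{0 ≤ j ≤ n} ( D_{⌊k/2⌋}(j) + D̃_{k−⌊k/2⌋}(j+1) )`. -/
theorem kCost_split_at_middle (n k : ℕ) (x : ℕ → ℝ)
    (hsort : ∀ ⦃p q : ℕ⦄, 1 ≤ p → p ≤ q → q ≤ n → x p ≤ x q)
    (hk : 2 ≤ k) :
    kCost x k n
      = (Finset.Icc 0 n).inf' ⟨0, by simp⟩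
          (fun j => kCost x (k / 2) j + kCostSuffix x n (k - k / 2) (j + 1)) := by
  have hk2 : 1 ≤ k / 2 := by omega
  have hk2' : 1 ≤ k - k / 2 := by omega
  -- sets
  set A : ℕ → ℕ → Set ℝ := fun i m => { c : ℝ | ∃ b : ℕ → ℕ, Monotone b ∧ b 0 = 0 ∧ b i = m ∧
    c = ∑ t ∈ Finset.range i, clusterCost x (b t + 1) (b (t + 1)) } with hA
  set B : ℕ → ℕ → Set ℝ := fun i m => { c : ℝ | ∃ b : ℕ → ℕ, Monotone b ∧ b 0 = m - 1 ∧ b i = n ∧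
    c = ∑ t ∈ Finset.range i, clusterCost x (b t + 1) (b (t + 1)) } with hB
  have hAbdd : ∀ i m, BddBelow (A i m) := by
    rintro i m
    exact ⟨0, by rintro c ⟨b, -, -, -, rfl⟩; exact costSum_nonneg x i b⟩
  have hBbdd : ∀ i m, BddBelow (B i m) := by
    rintro i m
    exact ⟨0, by rintro c ⟨b, -, -, -, rfl⟩; exact costSum_nonneg x i b⟩
  have hAne : ∀ i m, 1 ≤ i → (A i m).Nonempty := by
    intro i m hi
    refine ⟨_, ⟨fun t => if t = 0 then 0 else m, ?_, by simp, by simp only [if_neg (by omega : i ≠ 0)], rfl⟩⟩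
    intro a b hab
    by_cases ha : a = 0
    · simp [ha]
    · show (if a = 0 then 0 else m) ≤ if b = 0 then 0 else m
      rw [if_neg ha, if_neg (show b ≠ 0 by omega)]
  have hBne : ∀ i m, 1 ≤ i → m - 1 ≤ n → (B i m).Nonempty := by
    intro i m hi hm
    refine ⟨_, ⟨fun t => if t = 0 then m - 1 else n, ?_, by simp, by simp only [if_neg (by omega : i ≠ 0)], rfl⟩⟩
    intro a b hab
    by_cases ha : a = 0 <;> by_cases hb : b = 0 <;> simp only [if_pos, if_neg, ha, hb, ite_true, ite_false] <;> omega
  have hkeq : k / 2 + (k - k / 2) = k := by omega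
  refine le_antisymm ?_ ?_
  · -- kCost ≤ inf'
    obtain ⟨j, hjmem, hje⟩ := Finset.exists_mem_eq_inf' (⟨0, by simp⟩ : (Finset.Icc 0 n).Nonempty)
      (fun j => kCost x (k / 2) j + kCostSuffix x n (k - k / 2) (j + 1))
    rw [hje]
    have hjn : j ≤ n := by simpa using hjmem
    -- kCost x k n ≤ a + b for a ∈ A (k/2) j, b ∈ B (k-k/2) (j+1)
    have key : ∀ a ∈ A (k / 2) j, ∀ c ∈ B (k - k / 2) (j + 1), kCost x k n ≤ a + c := by
      rintro a ⟨b1, hb1m, hb10, hb1k, rfl⟩ c ⟨b2, hb2m, hb20, hb2k, rfl⟩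
      simp only [Nat.add_sub_cancel] at hb20
      set b : ℕ → ℕ := fun t => if t ≤ k / 2 then b1 t else b2 (t - k / 2) with hbdef
      have hbval : ∀ s, b (k / 2 + s) = b2 s := by
        intro s
        rcases Nat.eq_zero_or_pos s with rfl | hs
        · simp only [Nat.add_zero, hbdef, if_pos le_rfl, hb1k, hb20]
        · simp only [hbdef, if_neg (by omega : ¬ k / 2 + s ≤ k / 2), Nat.add_sub_cancel_left]
      have hbmono : Monotone b := by
        apply monotone_nat_of_le_succ
        intro t
        by_cases h1 : t + 1 ≤ k / 2
        · simp only [hbdef, if_pos h1, if_pos (by omega : t ≤ k / 2)]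
          exact hb1m (Nat.le_succ t)
        · by_cases h2 : t ≤ k / 2
          · have ht : t = k / 2 := by omega
            subst ht
            simp only [hbdef, if_pos le_rfl, if_neg h1, hb1k]
            rw [Nat.add_sub_cancel_left, ← hb20]
            exact hb2m (Nat.zero_le 1)
          · simp only [hbdef, if_neg h1, if_neg h2]
            exact hb2m (by omega)
      apply csInf_le (hAbdd k n)
      refine ⟨b, hbmono, by simp [hbdef, hb10, hk2], ?_, ?_⟩
      · have : b k = b (k / 2 + (k - k / 2)) := by rw [hkeq]
        rw [this, hbval, hb2k]
      · rw [sum_split k (fun t => clusterCost x (b t + 1) (b (t + 1)))]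
        congr 1
        · apply Finset.sum_congr rfl
          intro t ht
          simp only [Finset.mem_range] at ht
          simp [hbdef, (by omega : t ≤ k / 2), (by omega : t + 1 ≤ k / 2)]
        · apply Finset.sum_congr rfl
          intro t ht
          rw [hbval, show k / 2 + t + 1 = k / 2 + (t + 1) by omega, hbval]
    -- conclude
    have hAne' := hAne (k / 2) j hk2
    have hBne' := hBne (k - k / 2) (j + 1) hk2' (by omega)
    have h1 : ∀ a ∈ A (k / 2) j, kCost x k n - a ≤ kCostSuffix x n (k - k / 2) (j + 1) := by
      intro a ha
      apply le_csInf hBne'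
      intro c hc
      linarith [key a ha c hc]
    have h2 : kCost x k n - kCostSuffix x n (k - k / 2) (j + 1) ≤ kCost x (k / 2) j := by
      apply le_csInf hAne'
      intro a ha
      linarith [h1 a ha]
    linarith
  · -- inf' ≤ kCost
    apply le_csInf (hAne k n (by omega))
    rintro c ⟨b, hbm, hb0, hbk, rfl⟩
    set j := b (k / 2) with hj
    have hjn : j ≤ n := hbk ▸ hbm (Nat.div_le_self k 2)
    refine le_trans (Finset.inf'_le _ (Finset.mem_Icc.mpr ⟨Nat.zero_le j, hjn⟩)) ?_
    have hAle : kCost x (k / 2) j ≤ ∑ t ∈ Finset.range (k / 2), clusterCost x (b t + 1) (b (t + 1)) :=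
      csInf_le (hAbdd _ _) ⟨b, hbm, hb0, rfl, rfl⟩
    have hBle : kCostSuffix x n (k - k / 2) (j + 1)
        ≤ ∑ t ∈ Finset.range (k - k / 2), clusterCost x (b (k / 2 + t) + 1) (b (k / 2 + (t + 1))) := by
      refine csInf_le (hBbdd _ _) ⟨fun t => b (k / 2 + t), fun p q hpq => hbm (by omega), by simp [hj], ?_, ?_⟩
      · show b (k / 2 + (k - k / 2)) = n
        rw [hkeq, hbk]
      · rfl
    calc kCost x (k / 2) j + kCostSuffix x n (k - k / 2) (j + 1)
        ≤ _ + _ := add_le_add hAle hBle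
      _ = ∑ t ∈ Finset.range k, clusterCost x (b t + 1) (b (t + 1)) := by
          rw [sum_split k (fun t => clusterCost x (b t + 1) (b (t + 1)))]
          congr 1
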